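/- Let H and K be separable complex Hilbert spaces, let T : H → K be a continuous linear isomorphism, let (φ_j)_{j∈ℕ} be a Riesz basis of H, and let f ∈ K. For each J ∈ ℕ let h_J = Σ_{j=1}^J c_j^{(J)} φ_j, where (c_1^{(J)}, …, c_J^{(J)}) is the unique minimizer of ‖Σ_{j=1}^J c_j T φ_j − f‖ over ℂ^J. Then h_J converges in H to h = T⁻¹ f as J → ∞, and ‖h_J − h‖ ≤ ‖T⁻¹‖ · ‖P_J f − f‖ where P_J f is the orthogonal projection of f onto span{T φ_1, …, T φ_J}. -/

import Mathlib

/-- Convergence of the projection method: if `T : H ≃ K` is a continuous linear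
isomorphism, `(φ j)` is a Riesz basis of `H`, and for each `J` the coefficients
`c J` minimize `‖Σ_{j<J} c_j T φ_j − f‖`, then `h_J = Σ_{j<J} (c J) j • φ j`
converges to `h = T⁻¹ f`, with `‖h_J − h‖ ≤ ‖T⁻¹‖ · ‖P_J f − f‖`, where `P_J` is
the orthogonal projection onto `span {T φ_1, …, T φ_J}`. -/
theorem projection_method_converges
    {H K : Type*}
    [NormedAddCommGroup H] [InnerProductSpace ℂ H] [CompleteSpace H]
    [TopologicalSpace.SeparableSpace H]
    [NormedAddCommGroup K] [InnerProductSpace ℂ K] [CompleteSpace K]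
    [TopologicalSpace.SeparableSpace K]
    (T : H ≃L[ℂ] K) (φ : ℕ → H)
    (B : H ≃L[ℂ] H) (e : HilbertBasis ℕ ℂ H) (hB : ∀ j, B (φ j) = e j)
    (f : K) (c : (J : ℕ) → Fin J → ℂ)
    (hc : ∀ (J : ℕ) (d : Fin J → ℂ),
      ‖(∑ j, c J j • T (φ j)) - f‖ ≤ ‖(∑ j, d j • T (φ j)) - f‖) :
    Filter.Tendsto (fun J : ℕ => ∑ j : Fin J, c J j • φ j)
      Filter.atTop (nhds (T.symm f)) ∧
    ∀ J : ℕ,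
      haveI : FiniteDimensional ℂ
          (Submodule.span ℂ (Set.range fun j : Fin J => T (φ j))) :=
        FiniteDimensional.span_of_finite ℂ (Set.finite_range _)
      ‖(∑ j : Fin J, c J j • φ j) - T.symm f‖ ≤
        ‖(T.symm : K →L[ℂ] H)‖ *
          ‖(Submodule.orthogonalProjection
              (Submodule.span ℂ (Set.range fun j : Fin J => T (φ j))) f : K) - f‖ := by
  classical
  set S : ℕ → Submodule ℂ K :=
    fun J => Submodule.span ℂ (Set.range fun j : Fin J => T (φ j)) with hS
  haveI : ∀ J, FiniteDimensional ℂ (S J) :=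
    fun J => FiniteDimensional.span_of_finite ℂ (Set.finite_range _)
  -- the minimizer achieves at most the projection error
  have hproj : ∀ J : ℕ,
      ‖(∑ j : Fin J, c J j • T (φ j)) - f‖ ≤
        ‖(Submodule.orthogonalProjection (S J) f : K) - f‖ := by
    intro J
    have hmem : (Submodule.orthogonalProjection (S J) f : K) ∈
        Submodule.span ℂ (Set.range fun j : Fin J => T (φ j)) := Submodule.coe_mem _
    obtain ⟨d, hd⟩ := (Finsupp.mem_span_range_iff_exists_finsupp).1 hmem
    have hd' : ∑ j : Fin J, d j • T (φ j) = (Submodule.orthogonalProjection (S J) f : K) := by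
      rw [← hd, Finsupp.sum_fintype]
      simp
    calc ‖(∑ j : Fin J, c J j • T (φ j)) - f‖
        ≤ ‖(∑ j : Fin J, d j • T (φ j)) - f‖ := hc J d
      _ = ‖(Submodule.orthogonalProjection (S J) f : K) - f‖ := by rw [hd']
  -- the key estimate
  have key : ∀ J : ℕ,
      ‖(∑ j : Fin J, c J j • φ j) - T.symm f‖ ≤
        ‖(T.symm : K →L[ℂ] H)‖ * ‖(Submodule.orthogonalProjection (S J) f : K) - f‖ := by
    intro J
    have heq : (∑ j : Fin J, c J j • φ j) - T.symm f =
        T.symm ((∑ j : Fin J, c J j • T (φ j)) - f) := by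
      rw [map_sub]
      congr 1
      rw [map_sum]
      simp only [map_smul]
      congr 1
      ext j
      congr 1
      exact (T.symm_apply_apply (φ j)).symm
    calc ‖(∑ j : Fin J, c J j • φ j) - T.symm f‖
        = ‖(T.symm : K →L[ℂ] H) ((∑ j : Fin J, c J j • T (φ j)) - f)‖ := by rw [heq]; rfl
      _ ≤ ‖(T.symm : K →L[ℂ] H)‖ * ‖(∑ j : Fin J, c J j • T (φ j)) - f‖ :=
          (T.symm : K →L[ℂ] H).le_opNorm _
      _ ≤ ‖(T.symm : K →L[ℂ] H)‖ * ‖(Submodule.orthogonalProjection (S J) f : K) - f‖ :=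
          mul_le_mul_of_nonneg_left (hproj J) (norm_nonneg _)
  refine ⟨?_, fun J => key J⟩
  -- convergence: the projection error tends to zero
  have hmono : Monotone S := by
    intro J J' hJJ
    apply Submodule.span_mono
    rintro _ ⟨j, rfl⟩
    exact ⟨⟨j, lt_of_lt_of_le j.2 hJJ⟩, rfl⟩
  have hdense : (Submodule.span ℂ (Set.range fun j : ℕ => T (φ j))).topologicalClosure = ⊤ := by
    set A : H ≃L[ℂ] K := B.symm.trans T with hA
    have hφ : ∀ j, φ j = B.symm (e j) := fun j => by rw [← hB j]; simp
    have hrange : (Set.range fun j : ℕ => T (φ j)) = ⇑A '' Set.range ⇑e := by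
      ext x
      constructor
      · rintro ⟨j, rfl⟩
        exact ⟨e j, ⟨j, rfl⟩, by simp [hA, hφ j]⟩
      · rintro ⟨_, ⟨j, rfl⟩, rfl⟩
        exact ⟨j, by simp [hA, hφ j]⟩
    rw [eq_top_iff]
    intro x _
    have hx : A.symm x ∈ (Submodule.span ℂ (Set.range ⇑e)).topologicalClosure := by
      rw [e.dense_span]; trivial
    replace hx : A.symm x ∈ closure ((Submodule.span ℂ (Set.range ⇑e) : Set H)) := hx
    have hmem : x ∈ closure (⇑A '' (Submodule.span ℂ (Set.range ⇑e) : Set H)) := by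
      have hsub := image_closure_subset_closure_image (s := (Submodule.span ℂ (Set.range ⇑e) : Set H)) A.continuous
      have : x ∈ ⇑A '' closure ((Submodule.span ℂ (Set.range ⇑e) : Set H)) :=
        ⟨A.symm x, hx, A.apply_symm_apply x⟩
      exact hsub this
    have him : ⇑A '' (Submodule.span ℂ (Set.range ⇑e) : Set H) =
        (Submodule.span ℂ (Set.range fun j : ℕ => T (φ j)) : Set K) := by
      rw [hrange]
      exact congrArg (fun p : Submodule ℂ K => (p : Set K)) (Submodule.map_span (A : H →ₗ[ℂ] K) (Set.range ⇑e))
    rw [him] at hmem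
    exact hmem
  have herr : Filter.Tendsto (fun J => ‖(Submodule.orthogonalProjection (S J) f : K) - f‖)
      Filter.atTop (nhds 0) := by
    rw [Metric.tendsto_atTop]
    intro ε hε
    have hf : f ∈ closure (Submodule.span ℂ (Set.range fun j : ℕ => T (φ j)) : Set K) := by
      rw [← Submodule.topologicalClosure_coe, hdense]
      trivial
    obtain ⟨y, hy, hyf⟩ := Metric.mem_closure_iff.1 hf ε hε
    -- y lies in some S J₀
    have hy' : y ∈ ⨆ J, S J := by
      refine Submodule.span_le.2 ?_ hy
      rintro _ ⟨j, rfl⟩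
      refine Submodule.mem_iSup_of_mem (j + 1) ?_
      exact Submodule.subset_span ⟨⟨j, Nat.lt_succ_self j⟩, rfl⟩
    obtain ⟨J₀, hJ₀⟩ := (Submodule.mem_iSup_of_directed S (hmono.directed_le)).1 hy'
    refine ⟨J₀, fun J hJ => ?_⟩
    have hyJ : y ∈ S J := hmono hJ hJ₀
    have : ‖f - (Submodule.orthogonalProjection (S J) f : K)‖ ≤ ‖f - y‖ := by
      change ‖f - (S J).starProjection f‖ ≤ _
      rw [Submodule.starProjection_minimal]
      exact ciInf_le ⟨0, fun r ⟨x, hx⟩ => hx ▸ norm_nonneg _⟩ (⟨y, hyJ⟩ : S J)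
    have hfy : ‖f - y‖ < ε := by rw [← dist_eq_norm]; exact hyf
    rw [Real.dist_eq, sub_zero, abs_of_nonneg (norm_nonneg _), norm_sub_rev]
    exact lt_of_le_of_lt this hfy
  -- squeeze
  rw [tendsto_iff_norm_sub_tendsto_zero]
  refine squeeze_zero (fun J => norm_nonneg _) key ?_
  have := herr.const_mul ‖(T.symm : K →L[ℂ] H)‖
  simpa using this
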